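/- For d = 1, the largest size of an (s,s+1)-core partition with distinct parts is ⌊(1/3)·C(s+1,2)⌋ = ⌊s(s+1)/6⌋. -/

import Mathlib

open Finset

/-- `lam` gives the parts of a partition with `l` parts, 1-indexed:
positive parts which are nonincreasing. -/
def IsPartition (lam : ℕ → ℕ) (l : ℕ) : Prop :=
  (∀ i, 1 ≤ i → i ≤ l → 0 < lam i) ∧ ∀ i, 1 ≤ i → i < l → lam (i + 1) ≤ lam i

/-- Hook length of the box `(i,j)` of the Young diagram:
arm (boxes to the right) + leg (boxes below) + 1. -/
def hookLen (lam : ℕ → ℕ) (l i j : ℕ) : ℕ :=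
  (lam i - j) + ((Finset.Ioc i l).filter fun r => j ≤ lam r).card + 1

/-- The β-set: the set of first-column hook lengths `λ_i + l - i`. -/
def betaSet (lam : ℕ → ℕ) (l : ℕ) : Finset ℕ :=
  (Finset.Icc 1 l).image fun i => lam i + l - i

/-- `λ` is an `s`-core: no box of the Young diagram has hook length `s`. -/
def IsCore (lam : ℕ → ℕ) (l s : ℕ) : Prop :=
  ∀ i ∈ Finset.Icc 1 l, ∀ j ∈ Finset.Icc 1 (lam i), hookLen lam l i j ≠ s

/-- `λ` has `d`-distinct parts: consecutive parts differ by at least `d`. -/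
def DDistinct (lam : ℕ → ℕ) (l d : ℕ) : Prop :=
  ∀ i, 1 ≤ i → i < l → lam (i + 1) + d ≤ lam i

/-- `X` is a `d`-th order twin-free set. -/
def TwinFree (d : ℕ) (X : Finset ℕ) : Prop :=
  ∀ x ∈ X, ∀ k, 1 ≤ k → k ≤ d → x + k ∉ X

open Classical in
/-- Number of `d`-th order twin-free subsets of `{1, 2, ..., s-1}`. -/
noncomputable def numTwinFree (d s : ℕ) : ℕ :=
  ((Finset.Icc 1 (s - 1)).powerset.filter fun X => TwinFree d X).card


/-- The set of sizes of `(s,s+1)`-core partitions with `d`-distinct parts. -/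
def coreSizes (s d : ℕ) : Set ℕ :=
  {N | ∃ l lam, IsPartition lam l ∧ IsCore lam l s ∧ IsCore lam l (s + 1) ∧
    DDistinct lam l d ∧ N = ∑ i ∈ Finset.Icc 1 l, lam i}

/-- For `d = 1`, the largest size of an `(s,s+1)`-core partition with distinct
parts is `⌊s(s+1)/6⌋`. -/

lemma sum_formula (M : ℕ) : ∀ l, l ≤ M → 2 * (∑ i ∈ Icc 1 l, (M - i)) + l*(l+1) = 2*(l*M) := by
  intro l
  induction l with
  | zero => simp
  | succ n ih =>
    intro h
    rw [Finset.sum_Icc_succ_top (by omega : 1 ≤ n+1)]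
    have hn := ih (by omega)
    rw [show (n+1)*(n+1+1) = n*(n+1) + 2*(n+1) from by ring,
        show 2*((n+1)*M) = 2*(n*M) + 2*M from by ring]
    generalize n*(n+1) = B at hn ⊢
    generalize n*M = A at hn ⊢
    omega

lemma mod6 (s : ℕ) : (s % 3 = 1 ∧ s*(s+1) % 6 = 2) ∨ (s % 3 ≠ 1 ∧ s*(s+1) % 6 = 0) := by
  obtain ⟨a, b, hb, rfl⟩ : ∃ a b, b < 6 ∧ s = 6*a + b := ⟨s/6, s%6, by omega, by omega⟩
  rw [show (6*a+b)*(6*a+b+1) = 6*(6*a*a+2*a*b+a)+b*(b+1) from by ring, Nat.mul_add_mod]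
  interval_cases b <;> omega

lemma core_arith (s l : ℕ) (h2l : 2*l ≤ s) :
    (∑ i ∈ Icc 1 l, (s+1-l-i)) ≤ s*(s+1)/6 := by
  have hf := sum_formula (s+1-l) l (by omega)
  set S := ∑ i ∈ Icc 1 l, (s+1-l-i) with hS
  zify [show l ≤ s+1 from by omega] at hf
  set u : ℤ := (s:ℤ) - 3*l with hu
  have hZ : 6*(S:ℤ) + (u^2 + u) = s*(s+1) := by linear_combination 3*hf
  obtain ⟨P, hP⟩ : ∃ P, s*(s+1) = P := ⟨_, rfl⟩
  obtain hc | hc := mod6 s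
  · have hu3 : u % 3 = 1 := by omega
    have h2 : 2 ≤ u^2 + u := by
      have : u ≥ 1 ∨ u ≤ -2 := by omega
      rcases this with h | h <;> nlinarith
    have h6 : 6*S + 2 ≤ s*(s+1) := by
      have : 6*(S:ℤ) + 2 ≤ (s:ℤ)*(s+1) := by linarith
      exact_mod_cast this
    have hc2 := hc.2
    rw [hP] at h6 hc2 ⊢
    omega
  · have h2 : 0 ≤ u^2 + u := by
      rcases le_or_gt 0 u with h | h
      · positivity
      · nlinarith
    have h6 : 6*S ≤ s*(s+1) := by
      have : 6*(S:ℤ) ≤ (s:ℤ)*(s+1) := by linarith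
      exact_mod_cast this
    have hc2 := hc.2
    rw [hP] at h6 hc2 ⊢
    omega

lemma core_arith_eq (s : ℕ) :
    (∑ i ∈ Icc 1 ((s+1)/3), (s+1-(s+1)/3-i)) = s*(s+1)/6 := by
  set k := (s+1)/3 with hk
  have h2k : 2*k ≤ s := by omega
  have hf := sum_formula (s+1-k) k (by omega)
  set S := ∑ i ∈ Icc 1 k, (s+1-k-i) with hS
  zify [show k ≤ s+1 from by omega] at hf
  set u : ℤ := (s:ℤ) - 3*k with hu
  have hZ : 6*(S:ℤ) + (u^2 + u) = s*(s+1) := by linear_combination 3*hf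
  obtain ⟨P, hP⟩ : ∃ P, s*(s+1) = P := ⟨_, rfl⟩
  have hcase : (3*k = s ∧ s%3=0) ∨ (3*k+1 = s ∧ s%3=1) ∨ (3*k = s+1 ∧ s%3=2) := by omega
  obtain hc | hc := mod6 s
  · -- s % 3 = 1, c = 2, u = 1
    have hu1 : u = 1 := by omega
    have h6 : 6*S + 2 = s*(s+1) := by
      have : 6*(S:ℤ) + 2 = (s:ℤ)*(s+1) := by linear_combination hZ - (u+2)*hu1
      exact_mod_cast this
    have hc2 := hc.2
    rw [hP] at h6 hc2 ⊢
    omega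
  · -- c = 0, u = 0 or u = -1
    have hu1 : u = 0 ∨ u = -1 := by omega
    have h6 : 6*S = s*(s+1) := by
      have : 6*(S:ℤ) = (s:ℤ)*(s+1) := by
        rcases hu1 with h | h
        · linear_combination hZ - (u+1)*h
        · linear_combination hZ - u*h
      exact_mod_cast this
    have hc2 := hc.2
    rw [hP] at h6 hc2 ⊢
    omega

lemma mono_lemma (lam : ℕ → ℕ) (l : ℕ)
    (hmono : ∀ i, 1 ≤ i → i < l → lam (i+1) ≤ lam i) :
    ∀ i r, 1 ≤ i → i ≤ r → r ≤ l → lam r ≤ lam i := by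
  intro i r h1 hir
  induction r, hir using Nat.le_induction with
  | base => intro _; exact le_rfl
  | succ n hn ih =>
    intro hnl
    exact le_trans (hmono n (by omega) (by omega)) (ih (by omega))

lemma gap_lemma (lam : ℕ → ℕ) (l : ℕ)
    (hdist : ∀ i, 1 ≤ i → i < l → lam (i+1) + 1 ≤ lam i) :
    ∀ i r, 1 ≤ i → i ≤ r → r ≤ l → (lam r + l - r) + 2*(r-i) ≤ lam i + l - i := by
  intro i r h1 hir
  induction r, hir using Nat.le_induction with
  | base => intro _; omega
  | succ n hn ih =>
    intro hnl
    have h1' := hdist n (by omega) (by omega)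
    have h2' := ih (by omega)
    omega

lemma row1_complete (lam : ℕ → ℕ) (l s' : ℕ) (hl : 1 ≤ l)
    (hpos : ∀ i, 1 ≤ i → i ≤ l → 0 < lam i)
    (hmono : ∀ i, 1 ≤ i → i < l → lam (i+1) ≤ lam i)
    (hdist : ∀ i, 1 ≤ i → i < l → lam (i+1) + 1 ≤ lam i)
    (hm1 : 1 ≤ s') (hm2 : s' ≤ lam 1 + l - 1)
    (hno : ∀ j, 1 ≤ j → j ≤ lam 1 → hookLen lam l 1 j ≠ s') :
    ∃ r, 1 < r ∧ r ≤ l ∧ (lam r + l - r) + s' = lam 1 + l - 1 := by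
  have mono := mono_lemma lam l hmono
  have gap := gap_lemma lam l hdist
  have hpos1 : 0 < lam 1 := hpos 1 le_rfl hl
  set A : Finset ℕ := (Icc 1 (lam 1)).image (fun j => hookLen lam l 1 j) with hA
  set B : Finset ℕ := (Ioc 1 l).image (fun r => (lam 1 + l - 1) - (lam r + l - r)) with hB
  -- strict antitonicity of hookLen in j
  have hookStrict : ∀ j j', 1 ≤ j → j < j' → j' ≤ lam 1 →
      hookLen lam l 1 j' < hookLen lam l 1 j := by
    intro j j' h1 h2 h3
    have hcc : ((Ioc 1 l).filter fun r => j' ≤ lam r).card ≤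
        ((Ioc 1 l).filter fun r => j ≤ lam r).card := by
      apply card_le_card
      intro x hx
      simp only [mem_filter] at hx ⊢
      exact ⟨hx.1, by omega⟩
    simp only [hookLen]
    omega
  have hAcard : A.card = lam 1 := by
    rw [hA, card_image_of_injOn, Nat.card_Icc]; · omega
    intro a ha b hb hab
    simp only [mem_coe, mem_Icc] at ha hb
    dsimp only at hab
    by_contra hne
    rcases Nat.lt_or_ge a b with h | h
    · exact absurd hab (by have := hookStrict a b ha.1 h hb.2; omega)
    · have : b < a := by omega
      exact absurd hab (by have := hookStrict b a hb.1 this ha.2; omega)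
  have hBcard : B.card = l - 1 := by
    rw [hB, card_image_of_injOn, Nat.card_Ioc]
    intro a ha b hb hab
    simp only [mem_coe, mem_Ioc] at ha hb
    dsimp only at hab
    by_contra hne
    have gA := gap 1 a (le_refl 1) (by omega) ha.2
    have gB := gap 1 b (le_refl 1) (by omega) hb.2
    rcases Nat.lt_or_ge a b with h | h
    · have := gap a b (by omega) (by omega) hb.2
      omega
    · have hba : b < a := by omega
      have := gap b a (by omega) (by omega) ha.2
      omega
  have hcfull : ∀ j, ((Ioc 1 l).filter fun r => j ≤ lam r).card ≤ l - 1 := by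
    intro j
    calc ((Ioc 1 l).filter fun r => j ≤ lam r).card ≤ (Ioc 1 l).card :=
          card_le_card (filter_subset _ _)
      _ = l - 1 := Nat.card_Ioc 1 l
  have hAsub : A ⊆ Icc 1 (lam 1 + l - 1) := by
    intro a ha
    simp only [hA, mem_image, mem_Icc] at ha
    obtain ⟨j, ⟨hj1, hj2⟩, rfl⟩ := ha
    have := hcfull j
    simp only [hookLen, mem_Icc]
    omega
  have hBsub : B ⊆ Icc 1 (lam 1 + l - 1) := by
    intro b hb
    simp only [hB, mem_image, mem_Ioc] at hb
    obtain ⟨r, ⟨hr1, hr2⟩, rfl⟩ := hb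
    have := gap 1 r le_rfl (by omega) hr2
    simp only [mem_Icc]
    omega
  have hdisj : Disjoint A B := by
    rw [Finset.disjoint_left]
    intro a haA haB
    simp only [hA, mem_image, mem_Icc] at haA
    simp only [hB, mem_image, mem_Ioc] at haB
    obtain ⟨j, ⟨hj1, hj2⟩, hjv⟩ := haA
    obtain ⟨r, ⟨hr1, hr2⟩, hrv⟩ := haB
    have hlr : lam r ≤ lam 1 := mono 1 r le_rfl (by omega) hr2
    simp only [hookLen] at hjv
    rcases le_or_gt j (lam r) with hcase | hcase
    · -- many rows have lam ≥ j
      have hsub : Ioc 1 r ⊆ (Ioc 1 l).filter fun t => j ≤ lam t := by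
        intro t ht
        simp only [mem_Ioc] at ht
        simp only [mem_filter, mem_Ioc]
        refine ⟨⟨ht.1, by omega⟩, ?_⟩
        have := mono t r (by omega) ht.2 hr2
        omega
      have hcard : r - 1 ≤ ((Ioc 1 l).filter fun t => j ≤ lam t).card := by
        have := card_le_card hsub
        rwa [Nat.card_Ioc] at this
      omega
    · -- few rows have lam ≥ j
      have hsub : ((Ioc 1 l).filter fun t => j ≤ lam t) ⊆ Ioo 1 r := by
        intro t ht
        simp only [mem_filter, mem_Ioc] at ht
        simp only [mem_Ioo]
        refine ⟨ht.1.1, ?_⟩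
        by_contra hge
        have : lam t ≤ lam r := mono r t (by omega) (by omega) ht.1.2
        omega
      have hcard : ((Ioc 1 l).filter fun t => j ≤ lam t).card ≤ r - 2 := by
        have := card_le_card hsub
        rwa [Nat.card_Ioo] at this
      omega
  have hunion : A ∪ B = Icc 1 (lam 1 + l - 1) := by
    apply Finset.eq_of_subset_of_card_le (union_subset hAsub hBsub)
    rw [card_union_of_disjoint hdisj, hAcard, hBcard, Nat.card_Icc]
    omega
  have hs'mem : s' ∈ A ∪ B := by
    rw [hunion, mem_Icc]; exact ⟨hm1, hm2⟩
  rw [mem_union] at hs'mem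
  rcases hs'mem with hmem | hmem
  · simp only [hA, mem_image, mem_Icc] at hmem
    obtain ⟨j, ⟨hj1, hj2⟩, hjv⟩ := hmem
    exact absurd hjv (hno j hj1 hj2)
  · simp only [hB, mem_image, mem_Ioc] at hmem
    obtain ⟨r, ⟨hr1, hr2⟩, hrv⟩ := hmem
    have := gap 1 r le_rfl (by omega) hr2
    exact ⟨r, hr1, hr2, by omega⟩

theorem stmt13 (s : ℕ) (hs : 0 < s) :
    IsGreatest (coreSizes s 1) (s * (s + 1) / 6) := by
  constructor
  · -- membership: the staircase partition (s-k, s-k-1, ..., s+1-2k) with k = (s+1)/3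
    set k := (s+1)/3 with hk
    have h2k : 2*k ≤ s := by omega
    refine ⟨k, fun i => s+1-k-i, ⟨?_, ?_⟩, ?_, ?_, ?_, ?_⟩
    · intro i h1 h2; dsimp only; omega
    · intro i h1 h2; dsimp only; omega
    · intro i hi j hj
      rw [mem_Icc] at hi hj
      dsimp only at hj
      simp only [hookLen]
      have hc : ((Ioc i k).filter fun r => j ≤ s+1-k-r).card ≤ k - i := by
        calc ((Ioc i k).filter fun r => j ≤ s+1-k-r).card
            ≤ (Ioc i k).card := card_le_card (filter_subset _ _)
          _ = k - i := Nat.card_Ioc i k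
      omega
    · intro i hi j hj
      rw [mem_Icc] at hi hj
      dsimp only at hj
      simp only [hookLen]
      have hc : ((Ioc i k).filter fun r => j ≤ s+1-k-r).card ≤ k - i := by
        calc ((Ioc i k).filter fun r => j ≤ s+1-k-r).card
            ≤ (Ioc i k).card := card_le_card (filter_subset _ _)
          _ = k - i := Nat.card_Ioc i k
      omega
    · intro i h1 h2; dsimp only; omega
    · have h := core_arith_eq s
      rw [← hk] at h
      exact h.symm
  · -- upper bound
    rintro N ⟨l, lam, ⟨hpos, hmono⟩, hcs, hcs1, hdist, rfl⟩
    rcases Nat.eq_zero_or_pos l with rfl | hl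
    · simp
    have mono := mono_lemma lam l hmono
    have gap := gap_lemma lam l hdist
    have hpos1 : 0 < lam 1 := hpos 1 le_rfl hl
    have hbeta1 : hookLen lam l 1 1 = lam 1 + l - 1 := by
      have hfil : (Ioc 1 l).filter (fun r => 1 ≤ lam r) = Ioc 1 l := by
        apply filter_true_of_mem
        intro r hr
        rw [mem_Ioc] at hr
        exact hpos r (by omega) hr.2
      simp only [hookLen, hfil, Nat.card_Ioc]
      omega
    have hh1 : lam 1 + l - 1 ≤ s - 1 := by
      by_contra hcon
      push_neg at hcon
      have hne_s : lam 1 + l - 1 ≠ s := by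
        intro he
        exact hcs 1 (mem_Icc.mpr ⟨le_rfl, hl⟩) 1 (mem_Icc.mpr ⟨le_rfl, hpos1⟩)
          (by rw [hbeta1, he])
      have hne_s1 : lam 1 + l - 1 ≠ s+1 := by
        intro he
        exact hcs1 1 (mem_Icc.mpr ⟨le_rfl, hl⟩) 1 (mem_Icc.mpr ⟨le_rfl, hpos1⟩)
          (by rw [hbeta1, he])
      have hbig : s + 2 ≤ lam 1 + l - 1 := by omega
      obtain ⟨r, hr1, hr2, hr3⟩ := row1_complete lam l s hl hpos hmono hdist
        (by omega) (by omega)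
        (fun j hj1 hj2 => hcs 1 (mem_Icc.mpr ⟨le_rfl, hl⟩) j (mem_Icc.mpr ⟨hj1, hj2⟩))
      obtain ⟨r', hr1', hr2', hr3'⟩ := row1_complete lam l (s+1) hl hpos hmono hdist
        (by omega) (by omega)
        (fun j hj1 hj2 => hcs1 1 (mem_Icc.mpr ⟨le_rfl, hl⟩) j (mem_Icc.mpr ⟨hj1, hj2⟩))
      rcases Nat.lt_or_ge r r' with h | h
      · have := gap r r' (by omega) (by omega) hr2'
        omega
      · have hlt : r' < r ∨ r' = r := by omega
        rcases hlt with hlt | rfl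
        · have := gap r' r (by omega) (by omega) hr2
          omega
        · omega
    have hb : ∀ i ∈ Icc 1 l, lam i ≤ s+1-l-i := by
      intro i hi
      rw [mem_Icc] at hi
      have g := gap 1 i le_rfl hi.1 hi.2
      have hp := hpos i hi.1 hi.2
      omega
    have h2l : 2*l ≤ s := by
      have h1 := hb l (mem_Icc.mpr ⟨hl, le_rfl⟩)
      have h2 := hpos l hl le_rfl
      omega
    calc ∑ i ∈ Icc 1 l, lam i ≤ ∑ i ∈ Icc 1 l, (s+1-l-i) := Finset.sum_le_sum hb
      _ ≤ s*(s+1)/6 := core_arith s l h2l
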